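/- After fully collapsing a hypergraph Λ (removing identifiable vertices until no patches remain), the amount of debris of the terminal stable hypergraph Λ∞ equals the total number of identifiable hyperedges: Λ∞(∅) = |Λ*|, where Λ*(A) = Λ(A)·1_{A ⊆ V*}. -/

import Mathlib

/-- Removing vertex `v` from the hypergraph `Λ`. -/
def collapseAt {V : Type*} [DecidableEq V] (Λ : Finset V → ℕ) (v : V) :
    Finset V → ℕ :=
  fun A => if v ∈ A then 0 else Λ A + Λ (insert v A)

/-- The hypergraph obtained after the sequence of vertex removals `l`. -/
def collapseList {V : Type*} [DecidableEq V] (Λ : Finset V → ℕ) :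
    List V → (Finset V → ℕ)
  | [] => Λ
  | v :: l => collapseList (collapseAt Λ v) l

/-- `l` is a sequence of permitted collapses. -/
def IsPermittedSeq {V : Type*} [DecidableEq V] (Λ : Finset V → ℕ) :
    List V → Prop
  | [] => True
  | v :: l => 1 ≤ Λ {v} ∧ IsPermittedSeq (collapseAt Λ v) l

/-- A hypergraph is stable when it carries no patches. -/
def IsStable {V : Type*} (Λ : Finset V → ℕ) : Prop := ∀ v : V, Λ {v} = 0

/-- A maximal sequence of permitted collapses. -/
def IsMaximalSeq {V : Type*} [DecidableEq V] (Λ : Finset V → ℕ) (l : List V) : Prop :=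
  IsPermittedSeq Λ l ∧ IsStable (collapseList Λ l)

lemma vanish_collapseAt {V : Type*} [DecidableEq V] (Λ : Finset V → ℕ) (v w : V)
    (h : ∀ A, v ∈ A → Λ A = 0) : ∀ A, v ∈ A → collapseAt Λ w A = 0 := by
  intro A hA
  unfold collapseAt
  split
  · rfl
  · rw [h A hA, h (insert w A) (Finset.mem_insert_of_mem hA)]

lemma not_mem_of_vanish {V : Type*} [DecidableEq V] (Λ : Finset V → ℕ) (v : V)
    (l : List V) (h : ∀ A, v ∈ A → Λ A = 0) (hp : IsPermittedSeq Λ l) : v ∉ l := by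
  induction l generalizing Λ with
  | nil => simp
  | cons w l ih =>
    obtain ⟨h1, h2⟩ := hp
    simp only [List.mem_cons, not_or]
    constructor
    · rintro rfl
      have h0 := h _ (Finset.mem_singleton_self _)
      omega
    · exact ih _ (vanish_collapseAt Λ v w h) h2

lemma nodup_of_permitted {V : Type*} [DecidableEq V] (Λ : Finset V → ℕ)
    (l : List V) (hp : IsPermittedSeq Λ l) : l.Nodup := by
  induction l generalizing Λ with
  | nil => simp
  | cons v l ih =>
    obtain ⟨h1, h2⟩ := hp
    refine List.nodup_cons.mpr ⟨?_, ih _ h2⟩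
    exact not_mem_of_vanish (collapseAt Λ v) v l
      (fun A hA => by simp [collapseAt, hA]) h2

lemma collapseList_eq_sum {V : Type*} [DecidableEq V] (Λ : Finset V → ℕ)
    (l : List V) (hl : l.Nodup) (A : Finset V) (hA : ∀ v ∈ l, v ∉ A) :
    collapseList Λ l A = ∑ B ∈ l.toFinset.powerset, Λ (A ∪ B) := by
  induction l generalizing Λ A with
  | nil => simp [collapseList]
  | cons v l ih =>
    obtain ⟨hv, hl'⟩ := List.nodup_cons.mp hl
    have hvf : v ∉ l.toFinset := by simpa using hv
    have step : collapseList Λ (v :: l) A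
        = ∑ B ∈ l.toFinset.powerset, collapseAt Λ v (A ∪ B) := by
      exact ih (collapseAt Λ v) hl' A (fun w hw => hA w (List.mem_cons_of_mem _ hw))
    rw [step]
    have : ∀ B ∈ l.toFinset.powerset,
        collapseAt Λ v (A ∪ B) = Λ (A ∪ B) + Λ (insert v (A ∪ B)) := by
      intro B hB
      have hvB : v ∉ B := fun hc => hvf (Finset.mem_powerset.mp hB hc)
      have : v ∉ A ∪ B := by
        simp only [Finset.mem_union, not_or]
        exact ⟨hA v (List.mem_cons_self (a := v) (l := l)), hvB⟩
      simp [collapseAt, this]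
    rw [Finset.sum_congr rfl this, Finset.sum_add_distrib]
    have htf : (v :: l).toFinset = insert v l.toFinset := by simp
    rw [htf, Finset.sum_powerset_insert hvf]
    congr 1
    refine Finset.sum_congr rfl fun B hB => ?_
    rw [Finset.union_insert]

/-- The debris of the terminal stable hypergraph `Λ∞` equals the total number of
identifiable hyperedges: `Λ∞(∅) = |Λ*|`, where `Λ*(A) = Λ(A) · 1_{A ⊆ V*}` and `V*`
is the set of removed vertices. -/
theorem debris_eq_identifiable_hyperedges {V : Type*} [Fintype V] [DecidableEq V]
    (Λ : Finset V → ℕ) (l : List V) (h : IsMaximalSeq Λ l) :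
    collapseList Λ l ∅ = ∑ A : Finset V, (if A ⊆ l.toFinset then Λ A else 0) := by
  have hnd := nodup_of_permitted Λ l h.1
  rw [collapseList_eq_sum Λ l hnd ∅ (by simp)]
  have hfil : Finset.univ.filter (fun A => A ⊆ l.toFinset) = l.toFinset.powerset := by
    ext A; simp
  rw [← Finset.sum_filter, hfil]
  exact Finset.sum_congr rfl fun B _ => by rw [Finset.empty_union]
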